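/- Let σ be the antiholomorphic involution of ℙ¹(ℂ)×ℙ¹(ℂ) given by σ(x,y) = (ȳ, x̄). Let p and q be σ-fixed points and let r be a point of ℙ¹(ℂ)×ℙ¹(ℂ) such that the four points p, q, r, σ(r) are in general position. Then there exist A ∈ GL₂(ℂ) and μ ∈ ℂ∖{0,1,−1} such that the automorphism φ_A : (x,y) ↦ (A·x, Ā·y) of ℙ¹(ℂ)×ℙ¹(ℂ) maps p to ([1:0],[1:0]), q to ([0:1],[0:1]) and r to ([1:1],[μ:1]). -/

import Mathlib

noncomputable section

open ComplexConjugate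

/-- The projective line `ℙ¹(K)` over a field `K`, i.e. the projectivization of `K²`. -/
abbrev Pone (K : Type) [Field K] : Type := Projectivization K (Fin 2 → K)

theorem vec_ne_zero {K : Type} [Field K] {a b : K} (h : a ≠ 0 ∨ b ≠ 0) :
    (![a, b] : Fin 2 → K) ≠ 0 := by
  intro hv
  rcases h with h | h
  · exact h (by simpa using congrFun hv 0)
  · exact h (by simpa using congrFun hv 1)

/-- The point `[a : b]` of the projective line `ℙ¹(K)`. -/
def pt {K : Type} [Field K] (a b : K) (h : a ≠ 0 ∨ b ≠ 0) : Pone K :=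
  Projectivization.mk K ![a, b] (vec_ne_zero h)

theorem mulVecLin_injective {K : Type} [Field K] (A : GL (Fin 2) K) :
    Function.Injective ⇑(Matrix.mulVecLin (A : Matrix (Fin 2) (Fin 2) K)) := by
  intro v w hvw
  have h1 : (A : Matrix (Fin 2) (Fin 2) K).mulVec v
      = (A : Matrix (Fin 2) (Fin 2) K).mulVec w := hvw
  have h2 : ((↑(A⁻¹) : Matrix (Fin 2) (Fin 2) K) * (A : Matrix (Fin 2) (Fin 2) K)).mulVec v
      = ((↑(A⁻¹) : Matrix (Fin 2) (Fin 2) K) * (A : Matrix (Fin 2) (Fin 2) K)).mulVec w := by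
    rw [← Matrix.mulVec_mulVec, ← Matrix.mulVec_mulVec, h1]
  rw [Units.inv_mul, Matrix.one_mulVec, Matrix.one_mulVec] at h2
  exact h2

/-- The action of `A ∈ GL₂(K)` on the projective line `ℙ¹(K)`: `A·[v] = [A v]`. -/
def glMap {K : Type} [Field K] (A : GL (Fin 2) K) : Pone K → Pone K :=
  Projectivization.map (Matrix.mulVecLin (A : Matrix (Fin 2) (Fin 2) K)) (mulVecLin_injective A)

/-- Coordinatewise complex conjugation on `ℙ¹(ℂ)`: `[a : b] ↦ [ā : b̄]`. -/
def conjP1 (x : Pone ℂ) : Pone ℂ :=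
  Projectivization.mk ℂ (fun i => conj (x.rep i)) (by
    intro hc
    apply x.rep_nonzero
    funext i
    have h2 : conj (x.rep i) = 0 := congrFun hc i
    simpa using h2)

/-- Entrywise complex conjugation `A ↦ Ā` on `GL₂(ℂ)`. -/
def conjGL (A : GL (Fin 2) ℂ) : GL (Fin 2) ℂ :=
  Units.map (RingHom.toMonoidHom
    ((starRingEnd ℂ).mapMatrix : Matrix (Fin 2) (Fin 2) ℂ →+* Matrix (Fin 2) (Fin 2) ℂ)) A

/-- Four points of `ℙ¹(K) × ℙ¹(K)` are in general position: their images under the first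
projection are pairwise distinct, their images under the second projection are pairwise
distinct, and there is no nonzero bilinear form
`c₀₀u₀v₀ + c₀₁u₀v₁ + c₁₀u₁v₀ + c₁₁u₁v₁` vanishing at all four points (i.e. no curve of
bidegree `(1,1)` through all four points). -/
def GenPos {K : Type} [Field K] (P₁ P₂ P₃ P₄ : Pone K × Pone K) : Prop :=
  [P₁.1, P₂.1, P₃.1, P₄.1].Pairwise (· ≠ ·) ∧
  [P₁.2, P₂.2, P₃.2, P₄.2].Pairwise (· ≠ ·) ∧
  ∀ c₀₀ c₀₁ c₁₀ c₁₁ : K,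
    (∀ P ∈ [P₁, P₂, P₃, P₄],
      c₀₀ * P.1.rep 0 * P.2.rep 0 + c₀₁ * P.1.rep 0 * P.2.rep 1 +
        c₁₀ * P.1.rep 1 * P.2.rep 0 + c₁₁ * P.1.rep 1 * P.2.rep 1 = 0) →
    c₀₀ = 0 ∧ c₀₁ = 0 ∧ c₁₀ = 0 ∧ c₁₁ = 0

/-- The antiholomorphic involution `σ(x, y) = (ȳ, x̄)` of `ℙ¹(ℂ) × ℙ¹(ℂ)` (the real structure
of the quadric `Q_{3,1}`). -/
def sigmaQ (P : Pone ℂ × Pone ℂ) : Pone ℂ × Pone ℂ := (conjP1 P.2, conjP1 P.1)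

/-- The automorphism `φ_A : (x, y) ↦ (A·x, Ā·y)` of `ℙ¹(ℂ) × ℙ¹(ℂ)`. -/
def phiA (A : GL (Fin 2) ℂ) (P : Pone ℂ × Pone ℂ) : Pone ℂ × Pone ℂ :=
  (glMap A P.1, glMap (conjGL A) P.2)
lemma conj_rep_ne_zero (x : Pone ℂ) : (fun i => conj (x.rep i)) ≠ (0 : Fin 2 → ℂ) := by
  intro hc
  apply x.rep_nonzero
  funext i
  simpa using congrFun hc i

lemma mk_eq_mk_of_cross {v w : Fin 2 → ℂ} (hv : v ≠ 0) (hw : w ≠ 0)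
    (h : v 0 * w 1 = v 1 * w 0) :
    Projectivization.mk ℂ v hv = Projectivization.mk ℂ w hw := by
  rw [Projectivization.mk_eq_mk_iff']
  by_cases h0 : w 0 = 0
  · have hw1 : w 1 ≠ 0 := by
      intro h1; apply hw; funext i; fin_cases i <;> simp [h0, h1]
    have hv0 : v 0 = 0 := by
      have := h; rw [h0, mul_zero] at this
      exact (mul_eq_zero.mp this).resolve_right hw1
    refine ⟨v 1 / w 1, ?_⟩
    funext i; fin_cases i <;> simp [Pi.smul_apply, smul_eq_mul, h0, hv0]
    · field_simp
  · refine ⟨v 0 / w 0, ?_⟩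
    funext i; fin_cases i <;> simp only [Pi.smul_apply, smul_eq_mul, Fin.zero_eta, Fin.mk_one]
    · field_simp
    · field_simp
      linear_combination h

lemma mulVec0 (w x y z : ℂ) (v : Fin 2 → ℂ) :
    (!![w, x; y, z]).mulVec v 0 = w * v 0 + x * v 1 := by
  simp [Matrix.mulVec, dotProduct, Fin.sum_univ_two]

lemma mulVec1 (w x y z : ℂ) (v : Fin 2 → ℂ) :
    (!![w, x; y, z]).mulVec v 1 = y * v 0 + z * v 1 := by
  simp [Matrix.mulVec, dotProduct, Fin.sum_univ_two]

lemma map_fin2 (w x y z : ℂ) :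
    (!![w, x; y, z]).map (conj : ℂ → ℂ) = !![conj w, conj x; conj y, conj z] := by
  funext i j; fin_cases i <;> fin_cases j <;> simp [Matrix.map_apply]

lemma glMap_eq_pt (A : GL (Fin 2) ℂ) (x : Pone ℂ) {s t : ℂ} (hst : s ≠ 0 ∨ t ≠ 0)
    (hcross : (A : Matrix (Fin 2) (Fin 2) ℂ).mulVec x.rep 0 * t
      = (A : Matrix (Fin 2) (Fin 2) ℂ).mulVec x.rep 1 * s) :
    glMap A x = pt s t hst := by
  conv_lhs => rw [← x.mk_rep]
  unfold glMap pt
  rw [Projectivization.map_mk]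
  apply mk_eq_mk_of_cross
  simpa [Matrix.mulVecLin_apply] using hcross

lemma conj_ne_zero {z : ℂ} (h : z ≠ 0) : conj z ≠ 0 := by
  simpa using h

lemma glMap_eq_pt' (A : GL (Fin 2) ℂ) {B : Matrix (Fin 2) (Fin 2) ℂ}
    (hB : (A : Matrix (Fin 2) (Fin 2) ℂ) = B) (x : Pone ℂ) {s t : ℂ} {hst : s ≠ 0 ∨ t ≠ 0}
    (hcross : B.mulVec x.rep 0 * t = B.mulVec x.rep 1 * s) :
    glMap A x = pt s t hst := by
  apply glMap_eq_pt
  rw [hB]; exact hcross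

/-- Let `p`, `q` be `σ`-fixed points and `r` a point of `ℙ¹(ℂ) × ℙ¹(ℂ)` such
that `p, q, r, σ(r)` are in general position. Then there are `A ∈ GL₂(ℂ)` and
`μ ∈ ℂ ∖ {0, 1, −1}` such that `φ_A : (x,y) ↦ (A·x, Ā·y)` maps `p` to `([1:0],[1:0])`,
`q` to `([0:1],[0:1])` and `r` to `([1:1],[μ:1])`. -/
theorem statement1 (p q r : Pone ℂ × Pone ℂ)
    (hp : sigmaQ p = p) (hq : sigmaQ q = q)
    (hgen : GenPos p q r (sigmaQ r)) :
    ∃ (A : GL (Fin 2) ℂ) (μ : ℂ), μ ≠ 0 ∧ μ ≠ 1 ∧ μ ≠ -1 ∧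
      phiA A p = (pt 1 0 (Or.inl one_ne_zero), pt 1 0 (Or.inl one_ne_zero)) ∧
      phiA A q = (pt 0 1 (Or.inr one_ne_zero), pt 0 1 (Or.inr one_ne_zero)) ∧
      phiA A r = (pt 1 1 (Or.inl one_ne_zero), pt μ 1 (Or.inr one_ne_zero)) := by
  obtain ⟨a, ha⟩ : ∃ x, p.1.rep 0 = x := ⟨_, rfl⟩
  obtain ⟨b, hb⟩ : ∃ x, p.1.rep 1 = x := ⟨_, rfl⟩
  obtain ⟨c, hc⟩ : ∃ x, q.1.rep 0 = x := ⟨_, rfl⟩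
  obtain ⟨d, hd⟩ : ∃ x, q.1.rep 1 = x := ⟨_, rfl⟩
  obtain ⟨e, he⟩ : ∃ x, r.1.rep 0 = x := ⟨_, rfl⟩
  obtain ⟨f, hf⟩ : ∃ x, r.1.rep 1 = x := ⟨_, rfl⟩
  obtain ⟨g, hg⟩ : ∃ x, r.2.rep 0 = x := ⟨_, rfl⟩
  obtain ⟨k, hk⟩ : ∃ x, r.2.rep 1 = x := ⟨_, rfl⟩
  obtain ⟨hgen1, hgen2, hgen3⟩ := hgen
  -- fixed-point structure of p
  obtain ⟨κp, hκp, hp20, hp21⟩ :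
      ∃ κ : ℂ, κ ≠ 0 ∧ p.2.rep 0 = κ * conj a ∧ p.2.rep 1 = κ * conj b := by
    have hpf : conjP1 p.2 = p.1 := congrArg Prod.fst hp
    have h1p : Projectivization.mk ℂ (fun i => conj (p.2.rep i)) (conj_rep_ne_zero p.2)
        = Projectivization.mk ℂ p.1.rep p.1.rep_nonzero := by
      rw [Projectivization.mk_rep]; exact hpf
    obtain ⟨α, hα⟩ := (Projectivization.mk_eq_mk_iff' ℂ _ _ _ _).mp h1p
    have hα0 : α ≠ 0 := by
      rintro rfl
      exact conj_rep_ne_zero p.2 (by rw [← hα]; simp)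
    refine ⟨conj α, conj_ne_zero hα0, ?_, ?_⟩
    · have h2 := congrFun hα 0
      simp only [Pi.smul_apply, smul_eq_mul] at h2
      rw [ha] at h2
      calc p.2.rep 0 = conj (conj (p.2.rep 0)) := by rw [Complex.conj_conj]
        _ = conj (α * a) := by rw [h2]
        _ = conj α * conj a := by rw [map_mul]
    · have h2 := congrFun hα 1
      simp only [Pi.smul_apply, smul_eq_mul] at h2
      rw [hb] at h2
      calc p.2.rep 1 = conj (conj (p.2.rep 1)) := by rw [Complex.conj_conj]
        _ = conj (α * b) := by rw [h2]
        _ = conj α * conj b := by rw [map_mul]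
  -- fixed-point structure of q
  obtain ⟨κq, hκq, hq20, hq21⟩ :
      ∃ κ : ℂ, κ ≠ 0 ∧ q.2.rep 0 = κ * conj c ∧ q.2.rep 1 = κ * conj d := by
    have hqf : conjP1 q.2 = q.1 := congrArg Prod.fst hq
    have h1q : Projectivization.mk ℂ (fun i => conj (q.2.rep i)) (conj_rep_ne_zero q.2)
        = Projectivization.mk ℂ q.1.rep q.1.rep_nonzero := by
      rw [Projectivization.mk_rep]; exact hqf
    obtain ⟨α, hα⟩ := (Projectivization.mk_eq_mk_iff' ℂ _ _ _ _).mp h1q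
    have hα0 : α ≠ 0 := by
      rintro rfl
      exact conj_rep_ne_zero q.2 (by rw [← hα]; simp)
    refine ⟨conj α, conj_ne_zero hα0, ?_, ?_⟩
    · have h2 := congrFun hα 0
      simp only [Pi.smul_apply, smul_eq_mul] at h2
      rw [hc] at h2
      calc q.2.rep 0 = conj (conj (q.2.rep 0)) := by rw [Complex.conj_conj]
        _ = conj (α * c) := by rw [h2]
        _ = conj α * conj c := by rw [map_mul]
    · have h2 := congrFun hα 1
      simp only [Pi.smul_apply, smul_eq_mul] at h2
      rw [hd] at h2
      calc q.2.rep 1 = conj (conj (q.2.rep 1)) := by rw [Complex.conj_conj]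
        _ = conj (α * d) := by rw [h2]
        _ = conj α * conj d := by rw [map_mul]
  -- representatives of sigmaQ r
  obtain ⟨β, hs10, hs11⟩ :
      ∃ β : ℂ, (sigmaQ r).1.rep 0 = β * conj g ∧ (sigmaQ r).1.rep 1 = β * conj k := by
    have h1s : Projectivization.mk ℂ ((sigmaQ r).1.rep) (sigmaQ r).1.rep_nonzero
        = Projectivization.mk ℂ (fun i => conj (r.2.rep i)) (conj_rep_ne_zero r.2) := by
      rw [Projectivization.mk_rep]; rfl
    obtain ⟨β, hβ⟩ := (Projectivization.mk_eq_mk_iff' ℂ _ _ _ _).mp h1s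
    refine ⟨β, ?_, ?_⟩
    · have h2 := congrFun hβ 0
      simp only [Pi.smul_apply, smul_eq_mul] at h2
      rw [hg] at h2; exact h2.symm
    · have h2 := congrFun hβ 1
      simp only [Pi.smul_apply, smul_eq_mul] at h2
      rw [hk] at h2; exact h2.symm
  obtain ⟨γ, hs20, hs21⟩ :
      ∃ γ : ℂ, (sigmaQ r).2.rep 0 = γ * conj e ∧ (sigmaQ r).2.rep 1 = γ * conj f := by
    have h1s : Projectivization.mk ℂ ((sigmaQ r).2.rep) (sigmaQ r).2.rep_nonzero
        = Projectivization.mk ℂ (fun i => conj (r.1.rep i)) (conj_rep_ne_zero r.1) := by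
      rw [Projectivization.mk_rep]; rfl
    obtain ⟨γ, hγ⟩ := (Projectivization.mk_eq_mk_iff' ℂ _ _ _ _).mp h1s
    refine ⟨γ, ?_, ?_⟩
    · have h2 := congrFun hγ 0
      simp only [Pi.smul_apply, smul_eq_mul] at h2
      rw [he] at h2; exact h2.symm
    · have h2 := congrFun hγ 1
      simp only [Pi.smul_apply, smul_eq_mul] at h2
      rw [hf] at h2; exact h2.symm
  -- distinctness
  have hpq1 : p.1 ≠ q.1 := by
    have h' := hgen1; simp [List.pairwise_cons] at h'; tauto
  have hpr1 : p.1 ≠ r.1 := by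
    have h' := hgen1; simp [List.pairwise_cons] at h'; tauto
  have hqr1 : q.1 ≠ r.1 := by
    have h' := hgen1; simp [List.pairwise_cons] at h'; tauto
  have hpr2 : p.2 ≠ r.2 := by
    have h' := hgen2; simp [List.pairwise_cons] at h'; tauto
  have hqr2 : q.2 ≠ r.2 := by
    have h' := hgen2; simp [List.pairwise_cons] at h'; tauto
  have ptne : ∀ (x y : Pone ℂ), x.rep 0 * y.rep 1 = x.rep 1 * y.rep 0 → x = y := by
    intro x y hxy
    rw [← Projectivization.mk_rep x, ← Projectivization.mk_rep y]
    exact mk_eq_mk_of_cross _ _ hxy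
  -- nonvanishing quantities
  have hT : a * f - b * e ≠ 0 := by
    intro h0
    exact hpr1 (ptne p.1 r.1 (by rw [ha, hb, he, hf]; linear_combination h0))
  have hΔ : a * d - b * c ≠ 0 := by
    intro h0
    exact hpq1 (ptne p.1 q.1 (by rw [ha, hb, hc, hd]; linear_combination h0))
  have hS : d * e - c * f ≠ 0 := by
    intro h0
    exact hqr1 (ptne q.1 r.1 (by rw [hc, hd, he, hf]; linear_combination -h0))
  have hNf : conj a * k - conj b * g ≠ 0 := by
    intro h0
    exact hpr2 (ptne p.2 r.2 (by rw [hp20, hp21, hg, hk]; linear_combination κp * h0))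
  have hMf : conj d * g - conj c * k ≠ 0 := by
    intro h0
    exact hqr2 (ptne q.2 r.2 (by rw [hq20, hq21, hg, hk]; linear_combination (-κq) * h0))
  have hT' : conj a * conj f - conj b * conj e ≠ 0 := by
    rw [show conj a * conj f - conj b * conj e = conj (a * f - b * e) by
      rw [map_sub, map_mul, map_mul]]
    exact conj_ne_zero hT
  have hS' : conj d * conj e - conj c * conj f ≠ 0 := by
    rw [show conj d * conj e - conj c * conj f = conj (d * e - c * f) by
      rw [map_sub, map_mul, map_mul]]
    exact conj_ne_zero hS
  have hΔ' : conj a * conj d - conj b * conj c ≠ 0 := by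
    rw [show conj a * conj d - conj b * conj c = conj (a * d - b * c) by
      rw [map_sub, map_mul, map_mul]]
    exact conj_ne_zero hΔ
  set Mv : ℂ := (conj a * conj f - conj b * conj e) * (conj d * g - conj c * k) with hMv
  set Nv : ℂ := (conj d * conj e - conj c * conj f) * (conj a * k - conj b * g) with hNv
  have hM0 : Mv ≠ 0 := mul_ne_zero hT' hMf
  have hN0 : Nv ≠ 0 := mul_ne_zero hS' hNf
  -- the key non-degeneracy via the (1,1)-curve condition
  have key : ∀ ε : ℂ, ε = 1 ∨ ε = -1 → Mv ≠ ε * Nv := by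
    rintro ε hε hMN
    have hε0 : ε ≠ 0 := by rcases hε with rfl | rfl <;> norm_num
    have hε2 : ε * ε = 1 := by rcases hε with rfl | rfl <;> ring
    have hεc : conj ε = ε := by rcases hε with rfl | rfl <;> simp
    rw [hMv, hNv] at hMN
    have hMNc : (a * f - b * e) * (d * conj g - c * conj k)
        = ε * ((d * e - c * f) * (a * conj k - b * conj g)) := by
      have h2 := congrArg conj hMN
      simp only [map_mul, map_sub, Complex.conj_conj, hεc] at h2
      linear_combination h2
    set C00 : ℂ := -((a*f-b*e) * d * ((conj d*conj e - conj c*conj f) * conj b))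
        + ε * ((d*e-c*f) * b * ((conj a*conj f - conj b*conj e) * conj d)) with hC00
    set C01 : ℂ := (a*f-b*e) * d * ((conj d*conj e - conj c*conj f) * conj a)
        - ε * ((d*e-c*f) * b * ((conj a*conj f - conj b*conj e) * conj c)) with hC01
    set C10 : ℂ := (a*f-b*e) * c * ((conj d*conj e - conj c*conj f) * conj b)
        - ε * ((d*e-c*f) * a * ((conj a*conj f - conj b*conj e) * conj d)) with hC10
    set C11 : ℂ := -((a*f-b*e) * c * ((conj d*conj e - conj c*conj f) * conj a))
        + ε * ((d*e-c*f) * a * ((conj a*conj f - conj b*conj e) * conj c)) with hC11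
    obtain ⟨h00, h01, h10, h11⟩ := hgen3 C00 C01 C10 C11 (by
      intro P hP
      simp only [List.mem_cons, List.not_mem_nil, or_false] at hP
      rw [hC00, hC01, hC10, hC11]
      rcases hP with rfl | rfl | rfl | rfl
      · rw [ha, hb, hp20, hp21]; ring
      · rw [hc, hd, hq20, hq21]; ring
      · rw [he, hf, hg, hk]
        linear_combination (-((d*e-c*f)*(a*f-b*e)*ε)) * hMN
          - ((d*e-c*f)*(a*f-b*e)*((conj d*conj e-conj c*conj f)*(conj a*k-conj b*g))) * hε2
      · rw [hs10, hs11, hs20, hs21]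
        linear_combination
          (β*γ*((conj d*conj e-conj c*conj f)*(conj a*conj f-conj b*conj e))) * hMNc)
    rw [hC00] at h00; rw [hC01] at h01
    have hzero : ε * ((a*f-b*e) * (d*e-c*f) * (a*d-b*c))
        * ((conj a*conj f-conj b*conj e) * ((conj d*conj e-conj c*conj f)
          * (conj a*conj d - conj b*conj c))) = 0 := by
      rw [hC11] at h11; rw [hC10] at h10
      linear_combination
        (-((a*f-b*e) * c * ((conj d*conj e - conj c*conj f) * conj a))
          + ε * ((d*e-c*f) * a * ((conj a*conj f - conj b*conj e) * conj c))) * h00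
        - ((a*f-b*e) * c * ((conj d*conj e - conj c*conj f) * conj b)
          - ε * ((d*e-c*f) * a * ((conj a*conj f - conj b*conj e) * conj d))) * h01
    exact (mul_ne_zero (mul_ne_zero hε0 (mul_ne_zero (mul_ne_zero hT hS) hΔ))
      (mul_ne_zero hT' (mul_ne_zero hS' hΔ'))) hzero
  -- the matrix
  set Mt : Matrix (Fin 2) (Fin 2) ℂ :=
    !![(a*f-b*e)*d, -((a*f-b*e)*c); -((d*e-c*f)*b), (d*e-c*f)*a] with hMt
  have hdet : IsUnit Mt.det := by
    rw [hMt, Matrix.det_fin_two_of]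
    apply isUnit_iff_ne_zero.mpr
    intro h0
    exact (mul_ne_zero (mul_ne_zero hT hS) hΔ) (by linear_combination h0)
  refine ⟨⟨Mt, Mt⁻¹, Matrix.mul_nonsing_inv Mt hdet, Matrix.nonsing_inv_mul Mt hdet⟩,
    Mv / Nv, div_ne_zero hM0 hN0, ?_, ?_, ?_, ?_, ?_⟩
  · intro h1
    exact key 1 (Or.inl rfl) (by rw [one_mul]; exact (div_eq_one_iff_eq hN0).mp h1)
  · intro h1
    exact key (-1) (Or.inr rfl) ((div_eq_iff hN0).mp h1)
  · refine Prod.ext ?_ ?_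
    · refine glMap_eq_pt' (hst := Or.inl one_ne_zero) _ (rfl : _ = Mt) _ ?_
      rw [hMt, mulVec0, mulVec1, ha, hb]; ring
    · refine glMap_eq_pt' (hst := Or.inl one_ne_zero) _ (rfl : _ = Mt.map conj) _ ?_
      rw [hMt, map_fin2, mulVec0, mulVec1, hp20, hp21]
      simp only [map_mul, map_sub, map_neg, Complex.conj_conj]
      ring
  · refine Prod.ext ?_ ?_
    · refine glMap_eq_pt' (hst := Or.inr one_ne_zero) _ (rfl : _ = Mt) _ ?_
      rw [hMt, mulVec0, mulVec1, hc, hd]; ring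
    · refine glMap_eq_pt' (hst := Or.inr one_ne_zero) _ (rfl : _ = Mt.map conj) _ ?_
      rw [hMt, map_fin2, mulVec0, mulVec1, hq20, hq21]
      simp only [map_mul, map_sub, map_neg, Complex.conj_conj]
      ring
  · refine Prod.ext ?_ ?_
    · refine glMap_eq_pt' (hst := Or.inl one_ne_zero) _ (rfl : _ = Mt) _ ?_
      rw [hMt, mulVec0, mulVec1, he, hf]; ring
    · refine glMap_eq_pt' (hst := Or.inr one_ne_zero) _ (rfl : _ = Mt.map conj) _ ?_
      rw [hMt, map_fin2, mulVec0, mulVec1, hg, hk]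
      rw [mul_one, ← mul_div_assoc, eq_div_iff hN0, hMv, hNv]
      simp only [map_mul, map_sub, map_neg, Complex.conj_conj]
      ring
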